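/- For every integer n ≥ 2, define T_n(x) = Σ_{j=0}^{n−1} ((3n−2j)/(n+2)) c_{n,j+1} x^j, where c_{n,k} are the Narayana numbers. Then 𝒩_n(1) ≠ 0, 𝒩_{n+1}(1)/𝒩_n(1) = 2(2n+1)/(n+2), and (x−1)·T_n(x) = 𝒩_{n+1}(x) − (2(2n+1)/(n+2))·𝒩_n(x) as polynomials; that is, T_n is the unique polynomial 𝒩̃_n satisfying (x−1)𝒩̃_n(x) = 𝒩_{n+1}(x) − (𝒩_{n+1}(1)/𝒩_n(1))𝒩_n(x), and its coefficients are given by [x^j]𝒩̃_n = ((3n−2j)/(n+2)) c_{n,j+1} for 0 ≤ j ≤ n−1. -/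

import Mathlib

open Polynomial

noncomputable def narayanaNum (n k : ℕ) : ℝ :=
  (n.choose k : ℝ) * (n.choose (k - 1) : ℝ) / (n : ℝ)

noncomputable def redNarayana (n : ℕ) : Polynomial ℝ :=
  ∑ j ∈ Finset.range n, Polynomial.C (narayanaNum n (j + 1)) * Polynomial.X ^ j

noncomputable def redNarayanaCT (n : ℕ) : Polynomial ℝ :=
  ∑ j ∈ Finset.range n,
    Polynomial.C ((3 * (n : ℝ) - 2 * (j : ℝ)) / ((n : ℝ) + 2) * narayanaNum n (j + 1)) *
      Polynomial.X ^ j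

lemma narayanaNum_nonneg (n k : ℕ) : 0 ≤ narayanaNum n k := by
  unfold narayanaNum; positivity

lemma coeff_redNarayana (n j : ℕ) :
    (redNarayana n).coeff j = if j < n then narayanaNum n (j + 1) else 0 := by
  simp only [redNarayana, Polynomial.finset_sum_coeff, Polynomial.coeff_C_mul,
    Polynomial.coeff_X_pow, mul_ite, mul_one, mul_zero, Finset.sum_ite_eq, Finset.mem_range]

lemma coeff_redNarayanaCT (n j : ℕ) :
    (redNarayanaCT n).coeff j =
      if j < n then (3 * (n : ℝ) - 2 * (j : ℝ)) / ((n : ℝ) + 2) * narayanaNum n (j + 1)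
      else 0 := by
  simp only [redNarayanaCT, Polynomial.finset_sum_coeff, Polynomial.coeff_C_mul,
    Polynomial.coeff_X_pow, mul_ite, mul_one, mul_zero, Finset.sum_ite_eq, Finset.mem_range]

lemma key (n k : ℕ) (hk : k + 1 < n) :
    (3*(n:ℝ) - 2*(k:ℝ))/((n:ℝ)+2) * narayanaNum n (k+1)
      - (3*(n:ℝ) - 2*((k:ℝ)+1))/((n:ℝ)+2) * narayanaNum n (k+2)
    = narayanaNum (n+1) (k+2) - 2*(2*(n:ℝ)+1)/((n:ℝ)+2) * narayanaNum n (k+2) := by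
  have hkn : k ≤ n := by omega
  have hkn1 : k + 1 ≤ n := by omega
  have h1 : (n.choose k : ℝ) * ((n:ℝ) - (k:ℝ)) = (n.choose (k+1) : ℝ) * ((k:ℝ)+1) := by
    have h := Nat.choose_succ_right_eq n k
    have h' : ((n.choose (k+1) * (k+1) : ℕ) : ℝ) = ((n.choose k * (n - k) : ℕ) : ℝ) := by rw [h]
    push_cast [Nat.cast_sub hkn] at h'
    linarith
  have h2 : (n.choose (k+2) : ℝ) * ((k:ℝ)+2) = (n.choose (k+1) : ℝ) * ((n:ℝ) - (k:ℝ) - 1) := by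
    have h := Nat.choose_succ_right_eq n (k+1)
    have h' : ((n.choose (k+1+1) * (k+1+1) : ℕ) : ℝ) = ((n.choose (k+1) * (n - (k+1)) : ℕ) : ℝ) := by rw [h]
    push_cast [Nat.cast_sub hkn1] at h'
    linarith
  have h3 : ((n+1).choose (k+2) : ℝ) = (n.choose (k+1) : ℝ) + (n.choose (k+2) : ℝ) := by
    rw [Nat.choose_succ_succ n (k+1)]; push_cast; ring
  have h4 : ((n+1).choose (k+1) : ℝ) = (n.choose k : ℝ) + (n.choose (k+1) : ℝ) := by
    rw [Nat.choose_succ_succ n k]; push_cast; ring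
  have hnk : (n:ℝ) - (k:ℝ) ≠ 0 := by
    have : (k:ℝ) + 1 < n := by exact_mod_cast hk
    linarith
  have hk2 : ((k:ℝ) + 2) ≠ 0 := by positivity
  have e1 : (n.choose k : ℝ) = (n.choose (k+1) : ℝ) * ((k:ℝ)+1) / ((n:ℝ) - (k:ℝ)) := by
    field_simp; linarith
  have e2 : (n.choose (k+2) : ℝ) = (n.choose (k+1) : ℝ) * ((n:ℝ) - (k:ℝ) - 1) / ((k:ℝ)+2) := by
    field_simp; linarith
  have hn0 : (n:ℝ) ≠ 0 := by
    have h0 : 0 < n := by omega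
    exact_mod_cast h0.ne'
  have hn1 : (n:ℝ) + 1 ≠ 0 := by positivity
  have hn2 : (n:ℝ) + 2 ≠ 0 := by positivity
  simp only [narayanaNum, Nat.add_sub_cancel, show k+1-1 = k from rfl, show k+2-1 = k+1 from rfl,
    Nat.cast_add, Nat.cast_one]
  rw [h3, h4, e1, e2]
  field_simp
  ring

lemma main_id (n : ℕ) (hn : 2 ≤ n) :
    (Polynomial.X - Polynomial.C 1) * redNarayanaCT n
      = redNarayana (n + 1) -
        Polynomial.C (2 * (2 * (n : ℝ) + 1) / ((n : ℝ) + 2)) * redNarayana n := by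
  have hn0 : (n:ℝ) ≠ 0 := by positivity
  ext j
  rw [sub_mul]
  simp only [Polynomial.coeff_sub, Polynomial.coeff_C_mul, Polynomial.map_one, one_mul,
    coeff_redNarayana, coeff_redNarayanaCT]
  cases j with
  | zero =>
    rw [Polynomial.mul_coeff_zero, Polynomial.coeff_X_zero, zero_mul]
    have h0 : 0 < n := by omega
    have h0' : 0 < n + 1 := by omega
    simp only [h0, h0', if_pos]
    simp only [narayanaNum, zero_add, Nat.sub_self, Nat.choose_one_right, Nat.choose_zero_right, Nat.choose_self]
    push_cast
    field_simp
    ring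
  | succ k =>
    rw [Polynomial.coeff_X_mul, coeff_redNarayanaCT]
    rcases lt_trichotomy (k+1) n with h | h | h
    · have hk : k < n := by omega
      have hk1 : k + 1 < n + 1 := by omega
      simp only [hk, h, hk1, if_pos]
      have hkey := key n k h
      simp only [show k+1+1 = k+2 from rfl]
      push_cast at hkey ⊢
      linarith
    · have hk : k < n := by omega
      have hk1 : k + 1 < n + 1 := by omega
      have h' : ¬ (k + 1 < n) := by omega
      simp only [hk, hk1, h', if_pos, if_neg, if_true, if_false]
      rw [← h]
      simp only [narayanaNum, Nat.add_sub_cancel, Nat.choose_self, Nat.choose_succ_self_right]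
      push_cast
      have e1 : ((k:ℝ)+1) ≠ 0 := by positivity
      have e2 : ((k:ℝ)+1+1) ≠ 0 := by positivity
      have e3 : ((k:ℝ)+1+2) ≠ 0 := by positivity
      field_simp
      ring
    · have hk : ¬ (k < n) := by omega
      have hk1 : ¬ (k + 1 < n + 1) := by omega
      have h' : ¬ (k + 1 < n) := by omega
      simp [hk, hk1, h']

lemma eval_one_pos (n : ℕ) (hn : 1 ≤ n) : 0 < (redNarayana n).eval 1 := by
  have : (redNarayana n).eval 1 = ∑ j ∈ Finset.range n, narayanaNum n (j + 1) := by
    simp [redNarayana, Polynomial.eval_finset_sum]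
  rw [this]
  have h1 : narayanaNum n 1 = 1 := by
    have hn0 : (n:ℝ) ≠ 0 := by positivity
    simp [narayanaNum, Nat.choose_one_right, hn0]
  have : (1:ℝ) ≤ ∑ j ∈ Finset.range n, narayanaNum n (j + 1) := by
    calc (1:ℝ) = narayanaNum n (0 + 1) := by simp [h1]
    _ ≤ ∑ j ∈ Finset.range n, narayanaNum n (j + 1) :=
      Finset.single_le_sum (fun i _ => narayanaNum_nonneg n (i+1))
        (Finset.mem_range.mpr (by omega))
  linarith

theorem stmt_12 (n : ℕ) (hn : 2 ≤ n) :
    (redNarayana n).eval 1 ≠ 0 ∧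
    (redNarayana (n + 1)).eval 1 / (redNarayana n).eval 1
      = 2 * (2 * (n : ℝ) + 1) / ((n : ℝ) + 2) ∧
    (Polynomial.X - Polynomial.C 1) * redNarayanaCT n
      = redNarayana (n + 1) -
        Polynomial.C (2 * (2 * (n : ℝ) + 1) / ((n : ℝ) + 2)) * redNarayana n ∧
    (∀ S : Polynomial ℝ,
      (Polynomial.X - Polynomial.C 1) * S
        = redNarayana (n + 1) -
          Polynomial.C ((redNarayana (n + 1)).eval 1 / (redNarayana n).eval 1) * redNarayana n →
      S = redNarayanaCT n) ∧
    (∀ j < n, (redNarayanaCT n).coeff j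
      = (3 * (n : ℝ) - 2 * (j : ℝ)) / ((n : ℝ) + 2) * narayanaNum n (j + 1)) := by
  have hpos := eval_one_pos n (by omega)
  have hne : (redNarayana n).eval 1 ≠ 0 := ne_of_gt hpos
  have hid := main_id n hn
  have hratio : (redNarayana (n + 1)).eval 1 / (redNarayana n).eval 1
      = 2 * (2 * (n : ℝ) + 1) / ((n : ℝ) + 2) := by
    have := congrArg (Polynomial.eval 1) hid
    simp only [Polynomial.eval_mul, Polynomial.eval_sub, Polynomial.eval_X,
      Polynomial.eval_C, Polynomial.eval_one, sub_self, zero_mul] at this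
    rw [div_eq_iff hne]
    linarith
  refine ⟨hne, hratio, hid, ?_, ?_⟩
  · intro S hS
    rw [hratio] at hS
    have hXC : (Polynomial.X - Polynomial.C 1 : Polynomial ℝ) ≠ 0 :=
      Polynomial.X_sub_C_ne_zero 1
    exact mul_left_cancel₀ hXC (hS.trans hid.symm)
  · intro j hj
    rw [coeff_redNarayanaCT, if_pos hj]
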